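/- Let A be a C*-algebra and let Z ⊆ A be a closed linear subspace such that (x y* z + z y* x)/2 ∈ Z for all x,y,z ∈ Z. Let z ∈ Z with ‖z‖ < 1 and suppose ‖z z* z − z‖ < ε for some ε with 0 < ε ≤ 1/4. Then there exists e ∈ Z with e e* e = e and ‖e − z‖ < ε^{1/2}. -/

import Mathlib

open StarAlgebra in
/-- If `z * (star z * z)^n ∈ Z` for all `n`, `Z` closed, then `z * cfc g (star z * z) ∈ Z`. -/
lemma aux_mulZ_cfc_mem {A : Type*} [CStarAlgebra A] (Z : Submodule ℂ A)
    (hZclosed : IsClosed (Z : Set A)) (z : A)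
    (hpoly : ∀ n : ℕ, z * (star z * z) ^ n ∈ Z)
    (g : ℝ → ℝ) (hg : Continuous g) : z * cfc g (star z * z) ∈ Z := by
  set a := star z * z with ha_def
  have ha : IsSelfAdjoint a := .star_mul_self z
  have hnormal : IsStarNormal a := ha.isStarNormal
  have hmem : cfc g a ∈ elemental ℂ a := by
    rw [cfc_real_eq_complex g ha]
    have hcont : ContinuousOn (fun x : ℂ => (g x.re : ℂ)) (spectrum ℂ a) :=
      Continuous.continuousOn (by continuity)
    rw [cfc_apply _ a hnormal hcont, cfcHom_eq_of_isStarNormal]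
    exact SetLike.coe_mem _
  have hclosure : cfc g a ∈ closure (adjoin ℂ ({a} : Set A) : Set A) := by
    have := (adjoin ℂ ({a} : Set A)).topologicalClosure_coe
    exact this ▸ hmem
  have hmaps : ∀ x ∈ (adjoin ℂ ({a} : Set A) : Set A), z * x ∈ (Z : Set A) := by
    intro x hx
    have hx' : x ∈ Algebra.adjoin ℂ ({a} : Set A) := by
      have hx2 : x ∈ Algebra.adjoin ℂ (({a} : Set A) ∪ star ({a} : Set A)) := hx
      rwa [Set.star_singleton, ha.star_eq, Set.union_self] at hx2
    rw [Algebra.adjoin_singleton_eq_range_aeval] at hx'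
    obtain ⟨p, rfl⟩ := hx'
    have hall : ∀ q : Polynomial ℂ, z * Polynomial.aeval a q ∈ Z := by
      intro q
      induction q using Polynomial.induction_on' with
      | add p q hp hq =>
        rw [map_add, mul_add]
        exact Z.add_mem hp hq
      | monomial n c =>
        rw [Polynomial.aeval_monomial, ← Algebra.smul_def, mul_smul_comm]
        exact Z.smul_mem c (hpoly n)
    exact hall p
  have hfinal : z * cfc g a ∈ closure (Z : Set A) :=
    map_mem_closure (continuous_mul_left z) hclosure hmaps
  rwa [hZclosed.closure_eq] at hfinal

/-- Norm formula: `‖z * cfc m (star z * z)‖ ^ 2 = ‖cfc (fun t => t * m t ^ 2) (star z * z)‖`. -/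
lemma aux_norm_sq {A : Type*} [CStarAlgebra A] (z : A) (m : ℝ → ℝ) (hm : Continuous m) :
    ‖z * cfc m (star z * z)‖ ^ 2 = ‖cfc (fun t => t * m t ^ 2) (star z * z)‖ := by
  set a := star z * z with ha_def
  have ha : IsSelfAdjoint a := .star_mul_self z
  have hsa : star (cfc m a) = cfc m a := (cfc_predicate m a).star_eq
  have h1 : star (z * cfc m a) * (z * cfc m a) = cfc (fun t => t * m t ^ 2) a := by
    have : star (z * cfc m a) * (z * cfc m a) = cfc m a * a * cfc m a := by
      rw [star_mul, hsa, ha_def]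
      noncomm_ring
    rw [this]
    have e1 : cfc (fun t => m t * t) a = cfc m a * a := by
      rw [cfc_mul m (fun t : ℝ => t) a hm.continuousOn continuous_id.continuousOn, cfc_id' ℝ a]
    have e2 : cfc (fun t => m t * t * m t) a = cfc (fun t => m t * t) a * cfc m a :=
      cfc_mul (fun t : ℝ => m t * t) m a (hm.mul continuous_id).continuousOn hm.continuousOn
    rw [← e1, ← e2]
    exact cfc_congr fun t _ => by ring
  have h2 := CStarRing.norm_star_mul_self (x := z * cfc m a)
  rw [h1] at h2
  rw [h2, sq]

set_option maxHeartbeats 1000000 in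
theorem approx_tripotent {A : Type*} [NormedRing A] [StarRing A] [CStarRing A]
    [NormedAlgebra ℂ A] [StarModule ℂ A] [CompleteSpace A]
    (Z : Submodule ℂ A) (hZclosed : IsClosed (Z : Set A))
    (hZtriple : ∀ x ∈ Z, ∀ y ∈ Z, ∀ z ∈ Z,
      (1/2 : ℂ) • (x * star y * z + z * star y * x) ∈ Z)
    (z : A) (hzZ : z ∈ Z) (hznorm : ‖z‖ < 1)
    (ε : ℝ) (hε0 : 0 < ε) (hε : ε ≤ 1/4)
    (happrox : ‖z * star z * z - z‖ < ε) :
    ∃ e ∈ Z, e * star e * e = e ∧ ‖e - z‖ < Real.sqrt ε := by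
  letI : CStarAlgebra A :=
    { ‹NormedRing A›, ‹StarRing A›, ‹CStarRing A›, ‹NormedAlgebra ℂ A›,
      ‹StarModule ℂ A›, ‹CompleteSpace A› with }
  rcases subsingleton_or_nontrivial A with hA | hA
  · exact ⟨z, hzZ, Subsingleton.elim _ _, by
      simpa using Real.sqrt_pos.mpr hε0⟩
  -- setup
  set a := star z * z with ha_def
  have ha : IsSelfAdjoint a := .star_mul_self z
  set M := ‖z * star z * z - z‖ with hM_def
  have hM0 : 0 ≤ M := norm_nonneg _
  set ε' := (M + ε) / 2 with hε'_def
  have hε'pos : 0 < ε' := by positivity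
  have hMε' : M < ε' := by rw [hε'_def]; linarith
  have hε'ε : ε' < ε := by rw [hε'_def]; linarith
  have hε'lt : ε' < 1/4 := lt_of_lt_of_le hε'ε hε
  set s := Real.sqrt ε' with hs_def
  have hs0 : 0 < s := Real.sqrt_pos.mpr hε'pos
  have hs2 : s ^ 2 = ε' := Real.sq_sqrt hε'pos.le
  have hs_half : s < 1/2 := by nlinarith
  set α := ε' with hα_def
  set β := (1 - s) ^ 2 with hβ_def
  have hβ4 : (1:ℝ)/4 < β := by rw [hβ_def]; nlinarith
  have hβ0 : (0:ℝ) < β := by linarith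
  have hαβ : α < β := lt_trans hε'lt hβ4
  have hβ1 : β < 1 := by rw [hβ_def]; nlinarith
  have hsqrtβ : Real.sqrt β = 1 - s := by
    rw [hβ_def]; exact Real.sqrt_sq (by linarith)
  -- the function g
  set g : ℝ → ℝ :=
    fun t => min (max 0 (t - α) / ((β - α) * Real.sqrt β)) (1 / Real.sqrt (max t β))
    with hg_def
  have hg : Continuous g := by
    apply Continuous.min
    · exact ((continuous_const.max (continuous_id.sub continuous_const)).div_const _)
    · refine continuous_const.div
        (Real.continuous_sqrt.comp (continuous_id.max continuous_const)) fun t => ?_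
      exact ne_of_gt (Real.sqrt_pos.mpr (lt_of_lt_of_le hβ0 (le_max_right t β)))
  have hg0 : ∀ t, 0 ≤ g t := by
    intro t
    refine le_min (div_nonneg (le_max_left 0 _) ?_) (by positivity)
    exact mul_nonneg (by linarith) (Real.sqrt_nonneg _)
  have hgα : ∀ t, t ≤ α → g t = 0 := by
    intro t ht
    refine le_antisymm ?_ (hg0 t)
    have h1 : max 0 (t - α) = 0 := max_eq_left (by linarith)
    calc g t ≤ max 0 (t - α) / ((β - α) * Real.sqrt β) := min_le_left _ _
      _ = 0 := by rw [h1, zero_div]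
  have hgβ : ∀ t, β ≤ t → g t = 1 / Real.sqrt t := by
    intro t ht
    have htpos : 0 < t := lt_of_lt_of_le hβ0 ht
    have hmax : max t β = t := max_eq_left ht
    have h1 : max 0 (t - α) = t - α := max_eq_right (by linarith)
    have hst : Real.sqrt β ≤ Real.sqrt t := Real.sqrt_le_sqrt ht
    have hsβpos : 0 < Real.sqrt β := Real.sqrt_pos.mpr hβ0
    have hstpos : 0 < Real.sqrt t := Real.sqrt_pos.mpr htpos
    rw [hg_def]
    simp only
    rw [hmax, h1]
    apply min_eq_right
    rw [div_le_div_iff₀ hstpos (mul_pos (by linarith) hsβpos)]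
    nlinarith
  -- spectrum facts
  have hspec0 : ∀ t ∈ spectrum ℝ a, 0 ≤ t := spectrum_star_mul_self_nonneg
  have hspec1 : ∀ t ∈ spectrum ℝ a, t ≤ ‖z‖ ^ 2 := by
    intro t ht
    calc t ≤ |t| := le_abs_self t
      _ = ‖t‖ := rfl
      _ ≤ ‖a‖ := spectrum.norm_le_norm_of_mem ht
      _ = ‖z‖ ^ 2 := by rw [ha_def, CStarRing.norm_star_mul_self, sq]
  have hza : z * cfc (fun t : ℝ => t - 1) a = z * star z * z - z := by
    rw [cfc_sub (fun t : ℝ => t) (fun _ : ℝ => 1) a continuous_id.continuousOn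
      continuous_const.continuousOn, cfc_id' ℝ a, cfc_const_one ℝ a, mul_sub, mul_one,
      ha_def, mul_assoc]
  have hspec2 : ∀ t ∈ spectrum ℝ a, t * (t - 1) ^ 2 ≤ M ^ 2 := by
    intro t ht
    have key := aux_norm_sq z (fun t : ℝ => t - 1) (continuous_id.sub continuous_const)
    rw [hza] at key
    calc t * (t - 1) ^ 2 ≤ |t * (t - 1) ^ 2| := le_abs_self _
      _ = ‖(fun t : ℝ => t * (t - 1) ^ 2) t‖ := rfl
      _ ≤ ‖cfc (fun t : ℝ => t * (t - 1) ^ 2) a‖ :=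
          norm_apply_le_norm_cfc (fun t : ℝ => t * (t - 1) ^ 2) a ht
            ((continuous_id.mul ((continuous_id.sub continuous_const).pow 2))).continuousOn ha
      _ = M ^ 2 := by rw [← key]
  have hgap : ∀ t ∈ spectrum ℝ a, t ≤ α ∨ β ≤ t := by
    intro t ht
    by_contra hcon
    push_neg at hcon
    obtain ⟨h1, h2⟩ := hcon
    have h3 := hspec2 t ht
    have h4 : β ≤ 1 - s := by rw [hβ_def]; nlinarith
    have h5 : s < 1 - t := by linarith
    have h6 : ε' < (t - 1) ^ 2 := by nlinarith
    have h7 : ε' * ε' < t * (t - 1) ^ 2 := by nlinarith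
    have h8 : M ^ 2 < ε' * ε' := by nlinarith
    linarith
  -- membership of powers
  have hpoly : ∀ n : ℕ, z * a ^ n ∈ Z := by
    intro n
    induction n with
    | zero => simpa using hzZ
    | succ n ih =>
      have h := hZtriple z hzZ z hzZ (z * a ^ n) ih
      have t1 : z * star z * (z * a ^ n) = z * a ^ (n + 1) := by
        rw [← mul_assoc, mul_assoc z (star z) z, ← ha_def, mul_assoc, ← pow_succ']
      have t2 : z * a ^ n * star z * z = z * a ^ (n + 1) := by
        rw [mul_assoc (z * a ^ n), ← ha_def, mul_assoc, ← pow_succ]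
      rw [t1, t2, ← two_smul ℂ, smul_smul] at h
      norm_num at h
      exact h
  set e := z * cfc g a with he_def
  have heZ : e ∈ Z := aux_mulZ_cfc_mem Z hZclosed z hpoly g hg
  -- tripotency
  set q : ℝ → ℝ := fun t => g t * g t * t * g t with hq_def
  have hq_cont : Continuous q := by
    simp only [hq_def]
    exact ((hg.mul hg).mul continuous_id).mul hg
  have hqg_cont : Continuous (fun t => q t - g t) := hq_cont.sub hg
  have hcfcq : cfc g a * cfc g a * a * cfc g a = cfc q a := by
    have e1 : cfc (fun t => g t * g t) a = cfc g a * cfc g a :=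
      cfc_mul g g a hg.continuousOn hg.continuousOn
    have e2 : cfc (fun t => g t * g t * t) a = cfc (fun t => g t * g t) a * a := by
      rw [cfc_mul (fun t => g t * g t) (fun t : ℝ => t) a (hg.mul hg).continuousOn
        continuous_id.continuousOn, cfc_id' ℝ a]
    have e3 : cfc q a = cfc (fun t => g t * g t * t) a * cfc g a := by
      rw [hq_def]
      exact cfc_mul (fun t => g t * g t * t) g a
        ((hg.mul hg).mul continuous_id).continuousOn hg.continuousOn
    rw [e3, e2, e1]
  have hqg0 : ∀ t ∈ spectrum ℝ a, q t - g t = 0 := by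
    intro t ht
    rcases hgap t ht with h | h
    · rw [hq_def]
      simp only
      rw [hgα t h]
      ring
    · have htpos : 0 < t := lt_of_lt_of_le hβ0 h
      have hst : 0 < Real.sqrt t := Real.sqrt_pos.mpr htpos
      have ht2 : Real.sqrt t ^ 2 = t := Real.sq_sqrt htpos.le
      rw [hq_def]
      simp only
      rw [hgβ t h]
      field_simp
      rw [ht2]; ring
  have htrip : e * star e * e = e := by
    have hstar : star (cfc g a) = cfc g a := (cfc_predicate g a).star_eq
    have hgen : ∀ u : A, star u = u → z * u * (star u * star z) * (z * u)
        = z * (u * u * a * u) := by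
      intro u hu
      rw [hu, ha_def]
      noncomm_ring
    have hee : e * star e * e = z * cfc q a := by
      rw [he_def, star_mul, hgen (cfc g a) hstar, hcfcq]
    have hsub : e * star e * e - e = z * cfc (fun t => q t - g t) a := by
      rw [cfc_sub q g a hq_cont.continuousOn hg.continuousOn, mul_sub, hee, he_def]
    have hnorm : ‖e * star e * e - e‖ ^ 2 ≤ 0 := by
      rw [hsub, aux_norm_sq z (fun t => q t - g t) hqg_cont]
      apply norm_cfc_le le_rfl
      intro t ht
      simp [hqg0 t ht]
    have : ‖e * star e * e - e‖ = 0 := by nlinarith [norm_nonneg (e * star e * e - e)]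
    rw [norm_eq_zero] at this
    exact sub_eq_zero.mp this
  refine ⟨e, heZ, htrip, ?_⟩
  have hgm1 : Continuous (fun t => g t - 1) := hg.sub continuous_const
  have hez : e - z = z * cfc (fun t => g t - 1) a := by
    rw [cfc_sub g (fun _ : ℝ => 1) a hg.continuousOn continuous_const.continuousOn,
      cfc_const_one ℝ a, mul_sub, mul_one, he_def]
  have hkey : ‖e - z‖ ^ 2 ≤ ε' := by
    rw [hez, aux_norm_sq z (fun t => g t - 1) hgm1]
    apply norm_cfc_le hε'pos.le
    intro t ht
    have ht0 := hspec0 t ht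
    rcases hgap t ht with h | h
    · simp only [hgα t h]
      rw [Real.norm_eq_abs, abs_of_nonneg (by positivity)]
      nlinarith
    · have htpos : 0 < t := lt_of_lt_of_le hβ0 h
      have htne : t ≠ 0 := htpos.ne'
      have hst : 0 < Real.sqrt t := Real.sqrt_pos.mpr htpos
      have ht2 : Real.sqrt t ^ 2 = t := Real.sq_sqrt htpos.le
      have hstβ : 1 - s ≤ Real.sqrt t := by
        rw [← hsqrtβ]
        exact Real.sqrt_le_sqrt h
      have hst1 : Real.sqrt t ≤ ‖z‖ := by
        calc Real.sqrt t ≤ Real.sqrt (‖z‖ ^ 2) := Real.sqrt_le_sqrt (hspec1 t ht)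
          _ = ‖z‖ := Real.sqrt_sq (norm_nonneg z)
      have h9 : 1 / Real.sqrt t - 1 = (1 - Real.sqrt t) / Real.sqrt t := by
        field_simp
      have hval : t * (1 / Real.sqrt t - 1) ^ 2 = (1 - Real.sqrt t) ^ 2 := by
        rw [h9, div_pow, ht2]
        field_simp
      simp only [hgβ t h]
      rw [Real.norm_eq_abs, abs_of_nonneg (by positivity), hval]
      have ha1 : 0 ≤ 1 - Real.sqrt t := by linarith
      have ha2 : 1 - Real.sqrt t ≤ s := by linarith
      calc (1 - Real.sqrt t) ^ 2 ≤ s ^ 2 := pow_le_pow_left₀ ha1 ha2 2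
        _ = ε' := hs2
  have h1 : Real.sqrt ε ^ 2 = ε := Real.sq_sqrt hε0.le
  nlinarith [norm_nonneg (e - z), Real.sqrt_nonneg ε, hε'ε, hkey]
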